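/- Let x ∈ {0,1}^n with n/100 < |x|_0 ≤ n/50 (and n/100 ∈ ℕ), and let X_1, …, X_m be i.i.d. copies of the segmented-noise fitness of x (each X_k equals n − |x|_0 with probability 1/2 + 1/n and equals 3n + |x|_0 with probability 1/2 − 1/n), where m = 2n^3 + 1. Then the median of X_1, …, X_m equals n − |x|_0 with probability at least 1 − 2·exp(−8n⁴/m). -/

import Mathlib

open MeasureTheory ENNReal

/-- The median of `m` real values: the `((m+1)/2)`-th smallest value for odd `m`, and the
average of the `(m/2)`-th and `(m/2+1)`-th smallest values for even `m`. -/
noncomputable def medianOf {m : ℕ} (v : Fin m → ℝ) : ℝ :=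
  let s := List.insertionSort (· ≤ ·) (List.ofFn v)
  if m % 2 = 1 then s.getD ((m - 1) / 2) 0
  else (s.getD (m / 2 - 1) 0 + s.getD (m / 2) 0) / 2

/-- Segmented noise in the middle segment: for `n/100 < i ≤ n/50` the noisy fitness of a
solution with `i` zero-bits equals `n - i` with probability `1/2 + 1/n` and `3n + i` with
probability `1/2 - 1/n`. -/
noncomputable def segMidNoiseDist (n i : ℕ) : Measure ℝ :=
  ENNReal.ofReal (1 / 2 + 1 / n) • Measure.dirac ((n : ℝ) - i)
    + ENNReal.ofReal (1 / 2 - 1 / n) • Measure.dirac (3 * (n : ℝ) + i)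

/- ### Auxiliary lemmas -/

lemma count_add_count_aux {u w : ℝ} (hne : u ≠ w) :
    ∀ L : List ℝ, (∀ x ∈ L, x = u ∨ x = w) → L.count u + L.count w = L.length := by
  intro L
  induction L with
  | nil => simp
  | cons x L ih =>
    intro h
    have hx := h x (by simp)
    have hL := ih fun y hy => h y (by simp [hy])
    rcases hx with rfl | rfl <;>
      simp [List.count_cons, hne, Ne.symm hne] <;> omega

lemma sorted_two_values_aux {u w : ℝ} (hle : u ≤ w) (L : List ℝ)
    (hmem : ∀ x ∈ L, x = u ∨ x = w) :
    List.insertionSort (· ≤ ·) L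
      = List.replicate (L.length - L.count w) u ++ List.replicate (L.count w) w := by
  have hsorted : ∀ (k c : ℕ), List.Pairwise (· ≤ ·) (List.replicate k u ++ List.replicate c w) := by
    intro k c
    rw [List.pairwise_append]
    refine ⟨List.pairwise_replicate.2 (Or.inr le_rfl),
      List.pairwise_replicate.2 (Or.inr le_rfl), ?_⟩
    intro x hx y hy
    rw [List.eq_of_mem_replicate hx, List.eq_of_mem_replicate hy]
    exact hle
  by_cases hne : u = w
  · subst hne
    have hall : ∀ x ∈ L, x = u := fun x hx => (hmem x hx).elim id id
    refine List.Perm.eq_of_pairwise' (List.pairwise_insertionSort _ _) (hsorted _ _) ?_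
    refine (List.perm_insertionSort _ _).trans ?_
    rw [← List.replicate_add]
    have h1 : L.length - L.count u + L.count u = L.length :=
      Nat.sub_add_cancel List.count_le_length
    rw [h1]
    exact (List.eq_replicate_of_mem hall) ▸ List.Perm.refl _
  · refine List.Perm.eq_of_pairwise' (List.pairwise_insertionSort _ _) (hsorted _ _) ?_
    refine (List.perm_insertionSort _ _).trans (List.perm_iff_count.2 fun x => ?_)
    rw [List.count_append, List.count_replicate, List.count_replicate]
    by_cases hxu : x = u
    · subst hxu
      have := count_add_count_aux hne L hmem
      simp [Ne.symm hne]
      omega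
    · by_cases hxw : x = w
      · subst hxw; simp [hne]
      · have : x ∉ L := fun hx => by rcases hmem x hx with rfl | rfl <;> simp_all
        simp [List.count_eq_zero_of_not_mem this, Ne.symm hxu, Ne.symm hxw]

lemma medianOf_two_values_aux {N : ℕ} {u w : ℝ} (hlt : u < w) (v : Fin (2 * N + 1) → ℝ)
    (hmem : ∀ k, v k = u ∨ v k = w) (hcount : (List.ofFn v).count w ≤ N) :
    medianOf v = u := by
  have hlen : (List.ofFn v).length = 2 * N + 1 := by simp
  unfold medianOf
  have hmod : (2 * N + 1) % 2 = 1 := by omega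
  rw [if_pos hmod]
  rw [sorted_two_values_aux hlt.le _ (fun x hx => by
    obtain ⟨k, rfl⟩ := List.mem_ofFn.1 hx; exact hmem k)]
  have hidx : (2 * N + 1 - 1) / 2 = N := by omega
  rw [hidx, hlen]
  have hN : N < (List.replicate (2 * N + 1 - (List.ofFn v).count w) u).length := by
    rw [List.length_replicate]; omega
  rw [List.getD_append _ _ _ _ hN]
  have hN' : N < 2 * N + 1 - (List.ofFn v).count w := by omega
  rw [List.getD_eq_getElem?_getD, List.getElem?_replicate, if_pos hN']
  rfl

lemma prod_map_ite_aux (w : ℝ) (a b : ℝ≥0∞) :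
    ∀ L : List ℝ, (L.map fun x => if x = w then b else a).prod
      = a ^ (L.length - L.count w) * b ^ (L.count w) := by
  intro L
  induction L with
  | nil => simp
  | cons x L ih =>
    have hcle : L.count w ≤ L.length := List.count_le_length
    rw [List.map_cons, List.prod_cons, ih]
    by_cases h : x = w
    · subst h
      simp only [List.count_cons_self, List.length_cons, eq_self_iff_true, if_true]
      have h2 : L.length + 1 - (L.count x + 1) = L.length - L.count x := by omega
      rw [h2, pow_succ]
      ring
    · simp only [List.count_cons_of_ne h, List.length_cons, if_neg h]
      have h2 : L.length + 1 - L.count w = (L.length - L.count w) + 1 := by omega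
      rw [h2, pow_succ]
      ring

lemma two_pow_mul_aux (p q : ℝ) (k : ℕ) :
    (2 : ℝ) ^ (2 * k + 1) * (p ^ k * q ^ (k + 1)) = (2 * q) * (4 * (p * q)) ^ k := by
  rw [pow_succ (2:ℝ), pow_mul, pow_succ q, mul_pow 4 (p*q), mul_pow p q]
  norm_num
  ring

lemma measure_finset_eq_sum {α : Type*} [MeasurableSpace α] [MeasurableSingletonClass α]
    (μ : Measure α) (s : Finset α) : μ s = ∑ x ∈ s, μ {x} := by
  have h : (s : Set α) = ⋃ x ∈ s, {x} := by ext y; simp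
  rw [h, MeasureTheory.measure_biUnion_finset]
  · exact fun x _ y _ hxy => by simp [Set.disjoint_singleton, hxy]
  · exact fun b _ => measurableSet_singleton b

set_option maxHeartbeats 1600000 in
/-- Let `x ∈ {0,1}ⁿ` with `n/100 < |x|₀ = i ≤ n/50` (and `n/100 ∈ ℕ`), and let
`X₁, …, X_m` be i.i.d. copies of the segmented-noise fitness of `x`, where `m = 2n³ + 1`.
Then the median of `X₁, …, X_m` equals `n - i` with probability at least
`1 - 2·exp(-8n⁴/m)`. -/
theorem median_segmented_noise_mid (n i : ℕ) (hdvd : 100 ∣ n)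
    (hlo : n < 100 * i) (hhi : 50 * i ≤ n) :
    ENNReal.ofReal (1 - 2 * Real.exp (-8 * (n : ℝ) ^ 4 / (2 * (n : ℝ) ^ 3 + 1))) ≤
      (Measure.pi fun _ : Fin (2 * n ^ 3 + 1) => segMidNoiseDist n i)
        {v | medianOf v = (n : ℝ) - i} := by
  classical
  have hn100 : 100 ≤ n := by
    rcases hdvd with ⟨c, rfl⟩; omega
  have hnR : (100 : ℝ) ≤ (n : ℝ) := by exact_mod_cast hn100
  have hnpos : (0 : ℝ) < n := by linarith
  set n3 : ℕ := n ^ 3 with hn3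
  clear_value n3
  set m : ℕ := 2 * n3 + 1 with hm
  set u : ℝ := (n : ℝ) - i with hu
  set w : ℝ := 3 * (n : ℝ) + i with hw
  set p : ℝ := 1 / 2 + 1 / (n : ℝ) with hp
  set q : ℝ := 1 / 2 - 1 / (n : ℝ) with hq
  have hinv : (1 : ℝ) / n ≤ 1 / 100 := by
    apply div_le_div_of_nonneg_left <;> linarith
  have hinv0 : (0 : ℝ) < 1 / n := by positivity
  have hp0 : 0 ≤ p := by rw [hp]; linarith
  have hq0 : 0 ≤ q := by rw [hq]; linarith
  have hqp : q ≤ p := by rw [hp, hq]; linarith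
  have hpq1 : p + q = 1 := by rw [hp, hq]; ring
  have hiR : (0 : ℝ) ≤ i := Nat.cast_nonneg i
  have huw : u < w := by rw [hu, hw]; linarith
  set μ : Measure ℝ := segMidNoiseDist n i with hμ
  set a : ℝ≥0∞ := ENNReal.ofReal p with ha
  set b : ℝ≥0∞ := ENNReal.ofReal q with hb
  have hμs : ∀ s : Set ℝ, μ s = a * s.indicator 1 u + b * s.indicator 1 w := by
    intro s
    rw [hμ, segMidNoiseDist, Measure.add_apply, Measure.smul_apply, Measure.smul_apply,
      Measure.dirac_apply, Measure.dirac_apply]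
    rfl
  have hμu : μ {u} = a := by
    rw [hμs]
    simp [Set.indicator, huw.ne']
  have hμw : μ {w} = b := by
    rw [hμs]
    simp [Set.indicator, huw.ne]
  have hμuw : μ {u, w} = 1 := by
    rw [hμs]
    have h1 : (({u, w} : Set ℝ)).indicator (1 : ℝ → ℝ≥0∞) u = 1 := by simp
    have h2 : (({u, w} : Set ℝ)).indicator (1 : ℝ → ℝ≥0∞) w = 1 := by simp
    rw [h1, h2, mul_one, mul_one, ha, hb, ← ENNReal.ofReal_add hp0 hq0, hpq1,
      ENNReal.ofReal_one]
  haveI : IsProbabilityMeasure μ := by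
    constructor
    rw [hμs]
    simp only [Set.indicator_univ, Pi.one_apply, mul_one]
    rw [ha, hb, ← ENNReal.ofReal_add hp0 hq0, hpq1, ENNReal.ofReal_one]
  set M : Measure (Fin m → ℝ) := Measure.pi (fun _ : Fin m => μ) with hM
  set F : Finset (Fin m → ℝ) := Fintype.piFinset (fun _ : Fin m => ({u, w} : Finset ℝ))
    with hF
  have hmemF : ∀ v ∈ F, ∀ k, v k = u ∨ v k = w := by
    intro v hv k
    have := Fintype.mem_piFinset.1 hv k
    simpa using this
  have hmass : ∀ v ∈ F, M {v} = a ^ (m - (List.ofFn v).count w) * b ^ ((List.ofFn v).count w) := by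
    intro v hv
    rw [hM, ← Set.univ_pi_singleton v, Measure.pi_pi]
    have hprod : ∀ k, μ {v k} = if v k = w then b else a := by
      intro k
      rcases hmemF v hv k with h | h <;> rw [h]
      · rw [if_neg huw.ne, hμu]
      · rw [if_pos rfl, hμw]
    calc (∏ k, μ {v k})
        = (List.ofFn ((fun x => if x = w then b else a) ∘ v)).prod := by
          rw [List.prod_ofFn]
          exact Finset.prod_congr rfl fun k _ => hprod k
      _ = ((List.ofFn v).map fun x => if x = w then b else a).prod := by
          rw [List.map_ofFn]
      _ = a ^ ((List.ofFn v).length - (List.ofFn v).count w) * b ^ ((List.ofFn v).count w) := by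
          rw [prod_map_ite_aux]
      _ = a ^ (m - (List.ofFn v).count w) * b ^ ((List.ofFn v).count w) := by
          rw [List.length_ofFn]
  set B : Finset (Fin m → ℝ) := F.filter (fun v => n3 + 1 ≤ (List.ofFn v).count w) with hB
  have hMF : M (↑F) = 1 := by
    rw [hF, Fintype.coe_piFinset, hM, Measure.pi_pi]
    have h2 : (↑({u, w} : Finset ℝ) : Set ℝ) = ({u, w} : Set ℝ) := by simp
    rw [h2]
    simp [hμuw]
  have hball : ∀ v ∈ B, M {v} ≤ a ^ n3 * b ^ (n3 + 1) := by
    intro v hv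
    rw [hB, Finset.mem_filter] at hv
    obtain ⟨hvF, hc⟩ := hv
    rw [hmass v hvF]
    obtain ⟨c, hcdef⟩ : ∃ c, (List.ofFn v).count w = c := ⟨_, rfl⟩
    rw [hcdef] at hc ⊢
    have hcm : c ≤ m := by
      have hl := List.count_le_length (a := w) (l := List.ofFn v)
      rw [List.length_ofFn, hcdef] at hl
      exact hl
    have hba : b ≤ a := ENNReal.ofReal_le_ofReal hqp
    have hsplit : c = (c - (n3 + 1)) + (n3 + 1) := by omega
    calc a ^ (m - c) * b ^ c
        = a ^ (m - c) * (b ^ (c - (n3 + 1)) * b ^ (n3 + 1)) := by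
          rw [← pow_add, ← hsplit]
      _ ≤ a ^ (m - c) * (a ^ (c - (n3 + 1)) * b ^ (n3 + 1)) := by
          gcongr
      _ = a ^ ((m - c) + (c - (n3 + 1))) * b ^ (n3 + 1) := by
          rw [pow_add]; ring
      _ = a ^ n3 * b ^ (n3 + 1) := by
          have hx : m - c + (c - (n3 + 1)) = n3 := by rw [hm] at hcm; omega
          rw [hx]
  have hcardB : (B.card : ℝ≥0∞) ≤ 2 ^ m := by
    have h1 : B.card ≤ F.card := Finset.card_filter_le _ _
    have h2 : F.card = 2 ^ m := by
      rw [hF, Fintype.card_piFinset]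
      simp [Finset.card_pair huw.ne]
    have h3 : (B.card : ℝ≥0∞) ≤ (F.card : ℝ≥0∞) := by exact_mod_cast h1
    refine h3.trans ?_
    rw [h2]
    simp
  have hMB : M (↑B) ≤ 2 ^ m * (a ^ n3 * b ^ (n3 + 1)) := by
    rw [measure_finset_eq_sum]
    calc (∑ v ∈ B, M {v}) ≤ B.card • (a ^ n3 * b ^ (n3 + 1)) :=
          Finset.sum_le_card_nsmul _ _ _ hball
      _ = (B.card : ℝ≥0∞) * (a ^ n3 * b ^ (n3 + 1)) := by
          rw [nsmul_eq_mul]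
      _ ≤ 2 ^ m * (a ^ n3 * b ^ (n3 + 1)) := by gcongr
  -- real-number estimate
  have hreal : (2 : ℝ) ^ m * (p ^ n3 * q ^ (n3 + 1))
      ≤ 2 * Real.exp (-8 * (n : ℝ) ^ 4 / (2 * (n : ℝ) ^ 3 + 1)) := by
    have hn2 : (0 : ℝ) < (n : ℝ) ^ 2 := by positivity
    have h4pq : 4 * (p * q) = 1 - 4 / (n : ℝ) ^ 2 := by
      rw [hp, hq]
      field_simp
      ring
    have h4pq0 : 0 ≤ 4 * (p * q) := by
      rw [h4pq]
      have h5 : 4 / (n : ℝ) ^ 2 ≤ 4 / 100 ^ 2 := by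
        apply div_le_div_of_nonneg_left <;> nlinarith
      nlinarith
    have hexp1 : 4 * (p * q) ≤ Real.exp (-(4 / (n : ℝ) ^ 2)) := by
      have := Real.add_one_le_exp (-(4 / (n : ℝ) ^ 2))
      rw [h4pq]
      linarith
    have hpow : (4 * (p * q)) ^ n3 ≤ Real.exp (-(4 * (n : ℝ))) := by
      calc (4 * (p * q)) ^ n3 ≤ (Real.exp (-(4 / (n : ℝ) ^ 2))) ^ n3 :=
            pow_le_pow_left₀ h4pq0 hexp1 _
        _ = Real.exp ((n3 : ℕ) * (-(4 / (n : ℝ) ^ 2))) := by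
            rw [Real.exp_nat_mul]
        _ = Real.exp (-(4 * (n : ℝ))) := by
            congr 1
            rw [hn3]
            push_cast
            field_simp
    have hq12 : q ≤ 1 / 2 := by rw [hq]; linarith
    have hexp2 : Real.exp (-(4 * (n : ℝ)))
        ≤ Real.exp (-8 * (n : ℝ) ^ 4 / (2 * (n : ℝ) ^ 3 + 1)) := by
      apply Real.exp_le_exp.2
      rw [le_div_iff₀ (by positivity)]
      ring_nf
      nlinarith [hnpos, sq_nonneg ((n:ℝ))]
    calc (2 : ℝ) ^ m * (p ^ n3 * q ^ (n3 + 1)) = (2 * q) * (4 * (p * q)) ^ n3 := by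
          rw [hm]; exact two_pow_mul_aux p q n3
      _ ≤ 1 * Real.exp (-(4 * (n : ℝ))) := by
          apply mul_le_mul (by linarith) hpow (pow_nonneg h4pq0 _) (by norm_num)
      _ = Real.exp (-(4 * (n : ℝ))) := one_mul _
      _ ≤ Real.exp (-8 * (n : ℝ) ^ 4 / (2 * (n : ℝ) ^ 3 + 1)) := hexp2
      _ ≤ 2 * Real.exp (-8 * (n : ℝ) ^ 4 / (2 * (n : ℝ) ^ 3 + 1)) := by
          have := Real.exp_pos (-8 * (n : ℝ) ^ 4 / (2 * (n : ℝ) ^ 3 + 1))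
          linarith
  have hMBe : M (↑B) ≤ ENNReal.ofReal (2 * Real.exp (-8 * (n : ℝ) ^ 4 / (2 * (n : ℝ) ^ 3 + 1))) := by
    refine hMB.trans ?_
    have heq : (2 : ℝ≥0∞) ^ m * (a ^ n3 * b ^ (n3 + 1))
        = ENNReal.ofReal ((2 : ℝ) ^ m * (p ^ n3 * q ^ (n3 + 1))) := by
      rw [ENNReal.ofReal_mul (by positivity), ENNReal.ofReal_mul (by positivity),
        ENNReal.ofReal_pow hp0, ENNReal.ofReal_pow hq0,
        ENNReal.ofReal_pow (by norm_num : (0:ℝ) ≤ 2), ha, hb]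
      norm_num
    rw [heq]
    exact ENNReal.ofReal_le_ofReal hreal
  have hsub : ((↑F : Set (Fin m → ℝ)) \ ↑B) ⊆ {v | medianOf v = u} := by
    intro v hv
    obtain ⟨hvF, hvB⟩ := hv
    rw [Finset.mem_coe] at hvF
    have hcount : (List.ofFn v).count w ≤ n3 := by
      by_contra hcon
      exact hvB (by
        rw [Finset.mem_coe, hB, Finset.mem_filter]
        exact ⟨hvF, by omega⟩)
    exact medianOf_two_values_aux (N := n3) huw v (hmemF v hvF) hcount
  calc ENNReal.ofReal (1 - 2 * Real.exp (-8 * (n : ℝ) ^ 4 / (2 * (n : ℝ) ^ 3 + 1)))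
      = 1 - ENNReal.ofReal (2 * Real.exp (-8 * (n : ℝ) ^ 4 / (2 * (n : ℝ) ^ 3 + 1))) := by
        rw [ENNReal.ofReal_sub _ (by positivity), ENNReal.ofReal_one]
    _ ≤ 1 - M (↑B) := tsub_le_tsub_left hMBe 1
    _ ≤ M ((↑F : Set (Fin m → ℝ)) \ ↑B) := by
        rw [tsub_le_iff_right]
        calc (1 : ℝ≥0∞) = M (↑F) := hMF.symm
          _ ≤ M (((↑F : Set (Fin m → ℝ)) \ ↑B) ∪ ↑B) := by
              apply measure_mono
              intro x hx
              by_cases hxB : x ∈ (↑B : Set (Fin m → ℝ))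
              · exact Or.inr hxB
              · exact Or.inl ⟨hx, hxB⟩
          _ ≤ M ((↑F : Set (Fin m → ℝ)) \ ↑B) + M (↑B) := measure_union_le _ _
    _ ≤ M {v | medianOf v = u} := measure_mono hsub
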